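/- Let (Ω, F, P) be a probability space, γ ∈ (0,1], and let (X_j)_{j∈ℕ} be random variables with 0 < X_j < 1 almost surely such that for every finite nonempty set S ⊂ ℕ one has E(∏_{j∈S} X_j) = γ^{|S|}. Then for every k ≥ 1, E( Σ_{i=1}^{k} X_i ∏_{j=1}^{i−1} (1 − X_j) ) = 1 − (1 − γ)^k. -/

import Mathlib

open MeasureTheory

lemma stick_telescope (X : ℕ → ℝ) :
    ∀ k, ∑ i ∈ Finset.Icc 1 k, X i * ∏ j ∈ Finset.Icc 1 (i - 1), (1 - X j)
      = 1 - ∏ j ∈ Finset.Icc 1 k, (1 - X j) := by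
  intro k
  induction k with
  | zero => simp
  | succ n ih =>
      rw [Finset.sum_Icc_succ_top (by omega), Finset.prod_Icc_succ_top (by omega), ih]
      simp
      ring

/-- If `(X_j)_{j≥1}` are `(0,1)`-valued random variables whose products over
distinct indices have factorizing expectations `E(∏_{j∈S} X_j) = γ^{|S|}` with common mean
`γ ∈ (0,1]`, then the stick-breaking sum after `k` steps has mean `1 - (1-γ)^k`. -/
theorem stick_breaking_mean
    {Ω : Type*} [MeasurableSpace Ω] (P : Measure Ω) [IsProbabilityMeasure P]
    (γ : ℝ) (hγ0 : 0 < γ) (hγ1 : γ ≤ 1)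
    (X : ℕ → Ω → ℝ) (hmeas : ∀ j, Measurable (X j))
    (hrange : ∀ j, 1 ≤ j → ∀ᵐ ω ∂P, 0 < X j ω ∧ X j ω < 1)
    (hprod : ∀ S : Finset ℕ, S.Nonempty → (∀ j ∈ S, 1 ≤ j) →
      ∫ ω, ∏ j ∈ S, X j ω ∂P = γ ^ S.card) :
    ∀ k, 1 ≤ k →
      ∫ ω, ∑ i ∈ Finset.Icc 1 k, X i ω * ∏ j ∈ Finset.Icc 1 (i - 1), (1 - X j ω) ∂P
        = 1 - (1 - γ) ^ k := by
  intro k hk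
  -- a.e. all relevant X_j are in (0,1)
  have hae : ∀ᵐ ω ∂P, ∀ j ∈ Finset.Icc 1 k, 0 < X j ω ∧ X j ω < 1 := by
    rw [Filter.eventually_all_finset]
    intro j hj
    exact hrange j (Finset.mem_Icc.mp hj).1
  -- integrability of subset products
  have hint : ∀ T ∈ (Finset.Icc 1 k).powerset,
      Integrable (fun ω => ∏ j ∈ T, X j ω) P := by
    intro T hT
    rw [Finset.mem_powerset] at hT
    refine Integrable.mono' (integrable_const 1)
      (Finset.measurable_prod T (fun j _ => hmeas j)).aestronglyMeasurable ?_
    filter_upwards [hae] with ω hω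
    have h0 : ∀ j ∈ T, 0 ≤ X j ω := fun j hj => (hω j (hT hj)).1.le
    have h1 : ∀ j ∈ T, X j ω ≤ 1 := fun j hj => (hω j (hT hj)).2.le
    rw [Real.norm_eq_abs, abs_of_nonneg (Finset.prod_nonneg h0)]
    exact Finset.prod_le_one h0 h1
  -- value of subset product integrals
  have hval : ∀ T ∈ (Finset.Icc 1 k).powerset,
      ∫ ω, ∏ j ∈ T, X j ω ∂P = γ ^ T.card := by
    intro T hT
    rw [Finset.mem_powerset] at hT
    rcases T.eq_empty_or_nonempty with rfl | hne
    · simp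
    · exact hprod T hne (fun j hj => (Finset.mem_Icc.mp (hT hj)).1)
  -- pointwise telescoping rewrite
  have h1 : (∫ ω, ∑ i ∈ Finset.Icc 1 k, X i ω * ∏ j ∈ Finset.Icc 1 (i - 1), (1 - X j ω) ∂P)
      = ∫ ω, (1 - ∏ j ∈ Finset.Icc 1 k, (1 - X j ω)) ∂P := by
    congr 1
    ext ω
    exact stick_telescope (fun j => X j ω) k
  rw [h1]
  -- expand the product via inclusion-exclusion, pointwise
  have h2 : ∀ ω, (∏ j ∈ Finset.Icc 1 k, (1 - X j ω))
      = ∑ T ∈ (Finset.Icc 1 k).powerset, (-1 : ℝ) ^ T.card * ∏ j ∈ T, X j ω := by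
    intro ω
    have := Finset.prod_add (fun j => (-X j ω)) (fun _ => (1 : ℝ)) (Finset.Icc 1 k)
    simp only [neg_add_cancel_comm, Finset.prod_const_one, mul_one] at this
    calc ∏ j ∈ Finset.Icc 1 k, (1 - X j ω)
        = ∏ j ∈ Finset.Icc 1 k, (-X j ω + 1) := by
          apply Finset.prod_congr rfl; intros; ring
      _ = ∑ T ∈ (Finset.Icc 1 k).powerset, ∏ j ∈ T, (-X j ω) := this
      _ = _ := by
          apply Finset.sum_congr rfl
          intro T _
          calc ∏ j ∈ T, -X j ω = ∏ j ∈ T, (-1 : ℝ) * X j ω := by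
                apply Finset.prod_congr rfl; intros; ring
            _ = (-1 : ℝ) ^ T.card * ∏ j ∈ T, X j ω := by
                rw [Finset.prod_mul_distrib, Finset.prod_const]
  have hintprod : Integrable (fun ω => ∏ j ∈ Finset.Icc 1 k, (1 - X j ω)) P := by
    refine Integrable.mono' (integrable_const 1)
      (Finset.measurable_prod _ (fun j _ => (measurable_const.sub (hmeas j)))).aestronglyMeasurable ?_
    filter_upwards [hae] with ω hω
    have h0 : ∀ j ∈ Finset.Icc 1 k, 0 ≤ 1 - X j ω := fun j hj => by linarith [(hω j hj).2]
    have h1' : ∀ j ∈ Finset.Icc 1 k, 1 - X j ω ≤ 1 := fun j hj => by linarith [(hω j hj).1]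
    rw [Real.norm_eq_abs, abs_of_nonneg (Finset.prod_nonneg h0)]
    exact Finset.prod_le_one h0 h1'
  rw [integral_sub (integrable_const 1) hintprod, integral_const]
  simp only [measure_univ, probReal_univ, ENNReal.toReal_one, smul_eq_mul, one_mul]
  congr 1
  -- compute ∫ ∏ (1 - X j)
  have h3 : (∫ ω, ∏ j ∈ Finset.Icc 1 k, (1 - X j ω) ∂P)
      = ∑ T ∈ (Finset.Icc 1 k).powerset, (-1 : ℝ) ^ T.card * γ ^ T.card := by
    simp_rw [h2]
    rw [integral_finset_sum]
    · exact Finset.sum_congr rfl (fun T hT => by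
        rw [integral_const_mul, hval T hT])
    · intro T hT
      exact (hint T hT).const_mul _
  rw [h3]
  -- combinatorial identity
  have h4 : ∑ T ∈ (Finset.Icc 1 k).powerset, (-1 : ℝ) ^ T.card * γ ^ T.card
      = (1 - γ) ^ k := by
    have := Finset.prod_add (fun _ : ℕ => (-γ : ℝ)) (fun _ => (1 : ℝ)) (Finset.Icc 1 k)
    simp only [Finset.prod_const, Finset.prod_const_one, mul_one, one_pow] at this
    have hcard : (Finset.Icc 1 k).card = k := by
      rw [Nat.card_Icc]; omega
    calc ∑ T ∈ (Finset.Icc 1 k).powerset, (-1 : ℝ) ^ T.card * γ ^ T.card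
        = ∑ T ∈ (Finset.Icc 1 k).powerset, (-γ : ℝ) ^ T.card := by
          apply Finset.sum_congr rfl; intro T _; rw [← mul_pow]; ring_nf
      _ = (-γ + 1) ^ (Finset.Icc 1 k).card := this.symm
      _ = (1 - γ) ^ k := by rw [hcard]; ring_nf
  rw [h4]
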